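/- (Achievable Fano inequality, bound part) Let p^{XY} be a joint probability distribution on {1,...,n}×{1,...,n} with Y-marginal p^Y, and let E = ∑_{x≠y} p^{XY}(x,y) be the error probability. Then the conditional Shannon entropy S^{Y|X} = ∑_x p^X(x) S(p^{Y|x}) satisfies S^{Y|X} ≤ S(p̃_E^Y), where p̃_E^Y is the smoothed distribution constructed from p^Y and E. -/
import Mathlib


open Finset

-- `ME n p E` is the largest `m ∈ {2,…,n}` satisfying
-- `(E − ∑_{y=m+1}^n p(y))/(m−1) < p(m)` (and `0` if no such `m` exists).
open Classical in
noncomputable def ME (n : ℕ) (p : ℕ → ℝ) (E : ℝ) : ℕ :=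
  Nat.findGreatest
    (fun m => 2 ≤ m ∧ (E - ∑ y ∈ Finset.Icc (m + 1) n, p y) / ((m : ℝ) - 1) < p m) n

-- The smoothed distribution `p̃_E` built from a decreasing distribution `p` on `{1,…,n}`:
-- it equals `p` if `p(1) ≥ 1 − E`; otherwise `p̃_E(1) = 1 − E`, `p̃_E` takes the flat value
-- `(E − ∑_{y'=M_E+1}^n p(y'))/(M_E − 1)` on positions `2,…,M_E`, and equals `p` beyond `M_E`.
noncomputable def ptilde (n : ℕ) (p : ℕ → ℝ) (E : ℝ) : ℕ → ℝ := fun y =>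
  if 1 - E ≤ p 1 then p y
  else if y = 1 then 1 - E
  else if y ≤ ME n p E then
    (E - ∑ y' ∈ Finset.Icc (ME n p E + 1) n, p y') / ((ME n p E : ℝ) - 1)
  else p y

-- Shannon entropy (natural logarithm) of a distribution on `{1,…,n}`.
noncomputable def ent (n : ℕ) (q : ℕ → ℝ) : ℝ :=
  -∑ y ∈ Finset.Icc 1 n, q y * Real.log (q y)

-- Marginal on `X` of a joint distribution `r` on `{1,…,n}²`.
noncomputable def pXof (n : ℕ) (r : ℕ → ℕ → ℝ) (x : ℕ) : ℝ :=
  ∑ y ∈ Finset.Icc 1 n, r x y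

-- Conditional Shannon entropy `S^{Y|X} = ∑_x p^X(x) S(p^{Y|x})` of a joint distribution,
-- with `p^{Y|x}(y) = r(x,y)/p^X(x)` (terms with `p^X(x) = 0` contribute zero).
noncomputable def condEnt (n : ℕ) (r : ℕ → ℕ → ℝ) : ℝ :=
  ∑ x ∈ Finset.Icc 1 n, pXof n r x *
    (-∑ y ∈ Finset.Icc 1 n, (r x y / pXof n r x) * Real.log (r x y / pXof n r x))

-- The error probability `E = ∑_{x ≠ y} r(x,y)`.
noncomputable def errProb (n : ℕ) (r : ℕ → ℕ → ℝ) : ℝ :=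
  ∑ x ∈ Finset.Icc 1 n, ∑ y ∈ Finset.Icc 1 n, if x = y then 0 else r x y


private lemma core_log_ineq {a b : ℝ} (ha : 0 ≤ a) (hb : 0 < b) :
    a - b ≤ a * Real.log (a / b) := by
  rcases eq_or_lt_of_le ha with h | h
  · simp [← h]; linarith
  · have h1 : Real.log (b / a) ≤ b / a - 1 := Real.log_le_sub_one_of_pos (by positivity)
    have h2 : Real.log (a / b) = - Real.log (b / a) := by
      rw [← Real.log_inv]; congr 1; field_simp
    rw [h2]
    have h3 : a * Real.log (b / a) ≤ a * (b / a - 1) :=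
      mul_le_mul_of_nonneg_left h1 ha
    have h4 : a * (b / a) = b := by field_simp
    nlinarith

private lemma tangent_ineq {a b : ℝ} (ha : 0 ≤ a) (hb : 0 < b) :
    -(a * Real.log a) ≤ -(a * Real.log b) - a + b := by
  have h := core_log_ineq ha hb
  rcases eq_or_lt_of_le ha with h0 | h0
  · simp [← h0]; linarith
  · have : Real.log (a / b) = Real.log a - Real.log b :=
      Real.log_div (ne_of_gt h0) (ne_of_gt hb)
    rw [this] at h; nlinarith

/-- Gibbs inequality, unnormalized. -/
private lemma gibbs (s : Finset ℕ) (u v : ℕ → ℝ) (hu : ∀ j ∈ s, 0 ≤ u j)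
    (huv : ∀ j ∈ s, u j ≤ v j) (hv : ∑ j ∈ s, v j = 1) :
    -∑ j ∈ s, u j * Real.log (u j / (∑ i ∈ s, u i)) ≤ -∑ j ∈ s, u j * Real.log (v j) := by
  set c := ∑ i ∈ s, u i with hc
  have hc0 : 0 ≤ c := Finset.sum_nonneg hu
  rw [neg_le_neg_iff]
  have key : ∀ j ∈ s, u j * Real.log (v j) - u j * Real.log (u j / c) ≤ c * v j - u j := by
    intro j hj
    rcases eq_or_lt_of_le (hu j hj) with h0 | h0
    · have hv0 : 0 ≤ v j := le_trans (hu j hj) (huv j hj)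
      rw [← h0]; simp; positivity
    · have hvj : 0 < v j := lt_of_lt_of_le h0 (huv j hj)
      have hcj : 0 < c := lt_of_lt_of_le h0 (Finset.single_le_sum hu hj)
      have hcv : 0 < c * v j := by positivity
      have h := core_log_ineq (le_of_lt h0) hcv
      have e1 : Real.log (u j / (c * v j)) =
          Real.log (u j / c) - Real.log (v j) := by
        rw [show u j / (c * v j) = (u j / c) / v j by ring, Real.log_div (by positivity) (ne_of_gt hvj)]
      rw [e1] at h; nlinarith
  have := Finset.sum_le_sum key
  rw [Finset.sum_sub_distrib] at this
  have h2 : ∑ j ∈ s, (c * v j - u j) = 0 := by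
    rw [Finset.sum_sub_distrib, ← Finset.mul_sum, hv, mul_one, hc]; ring
  linarith

/-- Abel summation bound. -/
private lemma abel_bound (d L : ℕ → ℝ) :
    ∀ n : ℕ, (∀ k, 1 ≤ k → k ≤ n → 0 ≤ ∑ j ∈ Finset.Icc 1 k, d j) →
    (∀ j k, 1 ≤ j → j ≤ k → k ≤ n → L k ≤ L j) →
    (∑ j ∈ Finset.Icc 1 n, d j) * L n ≤ ∑ j ∈ Finset.Icc 1 n, d j * L j := by
  intro n
  induction n with
  | zero => intro _ _; simp
  | succ n ih =>
    intro hD hL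
    rw [Finset.sum_Icc_succ_top (by omega), Finset.sum_Icc_succ_top (by omega)]
    have ih' := ih (fun k hk1 hk2 => hD k hk1 (by omega))
      (fun j k h1 h2 h3 => hL j k h1 h2 (by omega))
    have step : (∑ j ∈ Finset.Icc 1 n, d j) * L (n + 1) ≤ ∑ j ∈ Finset.Icc 1 n, d j * L j := by
      rcases Nat.eq_zero_or_pos n with h | h
      · subst h; simp
      · have hDn : 0 ≤ ∑ j ∈ Finset.Icc 1 n, d j := hD n h (by omega)
        have hLn : L (n + 1) ≤ L n := hL n (n + 1) h (by omega) (by omega)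
        calc (∑ j ∈ Finset.Icc 1 n, d j) * L (n + 1)
            ≤ (∑ j ∈ Finset.Icc 1 n, d j) * L n := by nlinarith
          _ ≤ _ := ih'
    nlinarith [step]

/-- There is a bijection of `{1,…,n}` sorting `f` decreasingly. -/
private lemma exists_sorting (n : ℕ) (f : ℕ → ℝ) :
    ∃ e : ℕ → ℕ, Set.BijOn e (Set.Icc 1 n) (Set.Icc 1 n) ∧
      ∀ j k : ℕ, 1 ≤ j → j ≤ k → k ≤ n → f (e k) ≤ f (e j) := by
  classical
  set g : Fin n → ℝ := fun i => -(f (i.1 + 1)) with hg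
  set π := Tuple.sort g with hπ
  refine ⟨fun j => if h : 1 ≤ j ∧ j ≤ n then ((π ⟨j - 1, by omega⟩ : Fin n) : ℕ) + 1 else j,
    ⟨?_, ?_, ?_⟩, ?_⟩
  · intro j hj
    simp only [Set.mem_Icc] at hj ⊢
    rw [dif_pos hj]
    exact ⟨by omega, by have := (π ⟨j - 1, by omega⟩).2; omega⟩
  · intro j hj k hk hjk
    simp only [Set.mem_Icc] at hj hk
    simp only [dif_pos hj, dif_pos hk] at hjk
    have : (π ⟨j - 1, by omega⟩) = (π ⟨k - 1, by omega⟩) := by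
      apply Fin.ext; omega
    have := π.injective this
    have : j - 1 = k - 1 := congrArg Fin.val this
    omega
  · intro y hy
    simp only [Set.mem_Icc] at hy
    set i := π.symm ⟨y - 1, by omega⟩ with hi
    refine ⟨i.1 + 1, ?_, ?_⟩
    · simp only [Set.mem_Icc]; exact ⟨by omega, by have := i.2; omega⟩
    · have h : 1 ≤ i.1 + 1 ∧ i.1 + 1 ≤ n := ⟨by omega, by have := i.2; omega⟩
      simp only [dif_pos h]
      have h2 : (⟨i.1 + 1 - 1, by omega⟩ : Fin n) = i := by apply Fin.ext; simp
      rw [h2, hi, Equiv.apply_symm_apply]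
      simp
      omega
  · intro j k h1 h2 h3
    have hj : 1 ≤ j ∧ j ≤ n := ⟨h1, by omega⟩
    have hk : 1 ≤ k ∧ k ≤ n := ⟨by omega, h3⟩
    simp only [dif_pos hj, dif_pos hk]
    have hmono := Tuple.monotone_sort g
    have : g (π ⟨j - 1, by omega⟩) ≤ g (π ⟨k - 1, by omega⟩) := by
      have : (⟨j - 1, by omega⟩ : Fin n) ≤ ⟨k - 1, by omega⟩ := by
        simp [Fin.le_def]; omega
      exact hmono this
    simp only [hg] at this
    linarith

/-- Image of `Icc 1 n` under a `BijOn` map. -/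
private lemma image_Icc_eq {n : ℕ} {e : ℕ → ℕ}
    (he : Set.BijOn e (Set.Icc 1 n) (Set.Icc 1 n)) :
    (Finset.Icc 1 n).image e = Finset.Icc 1 n := by
  classical
  apply Finset.Subset.antisymm
  · intro y hy
    simp only [Finset.mem_image] at hy
    obtain ⟨j, hj, rfl⟩ := hy
    have := he.mapsTo (by simpa [Set.mem_Icc] using Finset.mem_Icc.mp hj)
    simpa [Finset.mem_Icc, Set.mem_Icc] using this
  · intro y hy
    obtain ⟨j, hj, rfl⟩ := he.surjOn (by simpa [Set.mem_Icc] using Finset.mem_Icc.mp hy)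
    exact Finset.mem_image.mpr ⟨j, by simpa [Finset.mem_Icc, Set.mem_Icc] using hj, rfl⟩

private lemma sum_reindex {n : ℕ} {e : ℕ → ℕ}
    (he : Set.BijOn e (Set.Icc 1 n) (Set.Icc 1 n)) (F : ℕ → ℝ) :
    ∑ j ∈ Finset.Icc 1 n, F (e j) = ∑ y ∈ Finset.Icc 1 n, F y := by
  classical
  have h := Finset.sum_image (f := F) (g := e) (s := Finset.Icc 1 n)
    (fun a ha b hb hab => he.injOn (by simpa [Set.mem_Icc] using Finset.mem_Icc.mp ha)
      (by simpa [Set.mem_Icc] using Finset.mem_Icc.mp hb) hab)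
  rw [image_Icc_eq he] at h
  exact h.symm

/-- Greedy: a sum over a set dominated elementwise by a larger set's elements. -/
private lemma greedy_sum_le (A T S : Finset ℕ) (f : ℕ → ℝ) (hTA : T ⊆ A) (hSA : S ⊆ A)
    (h0 : ∀ y ∈ A, 0 ≤ f y) (hcard : S.card ≤ T.card)
    (hdom : ∀ t ∈ T, ∀ s ∈ S, s ∉ T → f s ≤ f t) :
    ∑ y ∈ S, f y ≤ ∑ y ∈ T, f y := by
  classical
  rw [← Finset.sum_inter_add_sum_sdiff S T f, ← Finset.sum_inter_add_sum_sdiff T S f]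
  have hinter : S ∩ T = T ∩ S := Finset.inter_comm S T
  rw [hinter]
  have hcard2 : (S \ T).card ≤ (T \ S).card := by
    have h1 := Finset.card_inter_add_card_sdiff S T
    have h2 := Finset.card_inter_add_card_sdiff T S
    rw [hinter] at h1; omega
  have key : ∑ y ∈ S \ T, f y ≤ ∑ y ∈ T \ S, f y := by
    rcases Finset.eq_empty_or_nonempty (T \ S) with h | h
    · have : (S \ T) = ∅ := Finset.card_eq_zero.mp (by rw [h] at hcard2; simpa using hcard2)
      simp [this, h]
    · set m := (T \ S).inf' h f with hm
      have hm0 : 0 ≤ m := by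
        obtain ⟨t, ht, hteq⟩ := Finset.exists_mem_eq_inf' h f
        rw [hm, hteq]; exact h0 t (hTA (Finset.mem_sdiff.mp ht).1)
      calc ∑ y ∈ S \ T, f y ≤ (S \ T).card • m := by
            apply Finset.sum_le_card_nsmul
            intro y hy
            rw [hm]
            apply Finset.le_inf'
            intro t ht
            exact hdom t (Finset.mem_sdiff.mp ht).1 y (Finset.mem_sdiff.mp hy).1
              (Finset.mem_sdiff.mp hy).2
        _ ≤ (T \ S).card • m := by
            rw [nsmul_eq_mul, nsmul_eq_mul]
            exact mul_le_mul_of_nonneg_right (by exact_mod_cast hcard2) hm0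
        _ ≤ ∑ y ∈ T \ S, f y := by
            apply Finset.card_nsmul_le_sum
            intro t ht
            exact Finset.inf'_le f ht
  linarith
private lemma Icc_split (f : ℕ → ℝ) {m n : ℕ} (h : m ≤ n) :
    ∑ j ∈ Finset.Icc 1 n, f j = ∑ j ∈ Finset.Icc 1 m, f j + ∑ j ∈ Finset.Ioc m n, f j := by
  rw [show Finset.Icc 1 n = Finset.Ioc 0 n from Finset.Icc_add_one_left_eq_Ioc 0 n,
      show Finset.Icc 1 m = Finset.Ioc 0 m from Finset.Icc_add_one_left_eq_Ioc 0 m]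
  exact (Finset.sum_Ioc_consecutive f (Nat.zero_le m) h).symm

/-- Schur-type: entropy comparison from prefix-sum domination. -/
private lemma ent_le_of_prefix (n : ℕ) (r s : ℕ → ℝ)
    (hr0 : ∀ j, 1 ≤ j → j ≤ n → 0 ≤ r j)
    (hs0 : ∀ j, 1 ≤ j → j ≤ n → 0 ≤ s j)
    (hanti : ∀ j k, 1 ≤ j → j ≤ k → k ≤ n → s k ≤ s j)
    (hsum : ∑ j ∈ Finset.Icc 1 n, r j = ∑ j ∈ Finset.Icc 1 n, s j)
    (hpre : ∀ k, 1 ≤ k → k ≤ n → ∑ j ∈ Finset.Icc 1 k, s j ≤ ∑ j ∈ Finset.Icc 1 k, r j) :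
    -∑ j ∈ Finset.Icc 1 n, r j * Real.log (r j) ≤
      -∑ j ∈ Finset.Icc 1 n, s j * Real.log (s j) := by
  classical
  set m := Nat.findGreatest (fun j => 0 < s j) n with hm
  have hmn : m ≤ n := Nat.findGreatest_le n
  have hszero : ∀ j, m < j → j ≤ n → s j = 0 := by
    intro j hj1 hj2
    have := Nat.findGreatest_is_greatest (P := fun j => 0 < s j) (by rw [← hm]; exact hj1) hj2
    have h0 := hs0 j (by omega) hj2
    simp only [not_lt] at this
    linarith
  have hspos : ∀ j, 1 ≤ j → j ≤ m → 0 < s j := by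
    intro j hj1 hj2
    have hmne : m ≠ 0 := by omega
    have hex : ¬ (∀ ⦃k : ℕ⦄, 0 < k → k ≤ n → ¬ (0 < s k)) := by
      intro hall
      exact hmne (hm ▸ Nat.findGreatest_eq_zero_iff.mpr hall)
    push_neg at hex
    obtain ⟨k, hk1, hk2, hk3⟩ := hex
    have hPm : 0 < s m := by
      have := Nat.findGreatest_spec (P := fun j => 0 < s j) hk2 hk3
      rw [← hm] at this; exact this
    exact lt_of_lt_of_le hPm (hanti j m hj1 hj2 hmn)
  -- tail sums vanish
  have hstail : ∑ j ∈ Finset.Ioc m n, s j = 0 :=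
    Finset.sum_eq_zero (fun j hj => hszero j (Finset.mem_Ioc.mp hj).1 (Finset.mem_Ioc.mp hj).2)
  have hsm : ∑ j ∈ Finset.Icc 1 n, s j = ∑ j ∈ Finset.Icc 1 m, s j := by
    rw [Icc_split s hmn, hstail, add_zero]
  have hrm_le : ∑ j ∈ Finset.Icc 1 m, s j ≤ ∑ j ∈ Finset.Icc 1 m, r j := by
    rcases Nat.eq_zero_or_pos m with h | h
    · simp [h]
    · exact hpre m h hmn
  have hrtail : ∀ j ∈ Finset.Ioc m n, r j = 0 := by
    have hle : ∑ j ∈ Finset.Ioc m n, r j ≤ 0 := by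
      have := Icc_split r hmn
      rw [hsum, hsm] at this
      linarith
    have hge : ∀ j ∈ Finset.Ioc m n, 0 ≤ r j :=
      fun j hj => hr0 j (by have := Finset.mem_Ioc.mp hj; omega) (Finset.mem_Ioc.mp hj).2
    have : ∑ j ∈ Finset.Ioc m n, r j = 0 := le_antisymm hle (Finset.sum_nonneg hge)
    exact fun j hj => ((Finset.sum_eq_zero_iff_of_nonneg hge).mp this) j hj
  have hrs_m : ∑ j ∈ Finset.Icc 1 m, r j = ∑ j ∈ Finset.Icc 1 m, s j := by
    have h1 := Icc_split r hmn
    rw [Finset.sum_eq_zero hrtail, add_zero] at h1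
    rw [← h1, hsum, hsm]
  -- reduce entropies to `Icc 1 m`
  have hrent : ∑ j ∈ Finset.Icc 1 n, r j * Real.log (r j)
      = ∑ j ∈ Finset.Icc 1 m, r j * Real.log (r j) := by
    rw [Icc_split (fun j => r j * Real.log (r j)) hmn]
    have hz : ∑ j ∈ Finset.Ioc m n, r j * Real.log (r j) = 0 :=
      Finset.sum_eq_zero (fun j hj => by rw [hrtail j hj]; ring)
    rw [hz, add_zero]
  have hsent : ∑ j ∈ Finset.Icc 1 n, s j * Real.log (s j)
      = ∑ j ∈ Finset.Icc 1 m, s j * Real.log (s j) := by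
    rw [Icc_split (fun j => s j * Real.log (s j)) hmn]
    have hz : ∑ j ∈ Finset.Ioc m n, s j * Real.log (s j) = 0 :=
      Finset.sum_eq_zero (fun j hj => by
        rw [hszero j (Finset.mem_Ioc.mp hj).1 (Finset.mem_Ioc.mp hj).2]; ring)
    rw [hz, add_zero]
  rw [hrent, hsent]
  -- tangent bound
  have htan : ∀ j ∈ Finset.Icc 1 m, -(r j * Real.log (r j)) ≤
      -(r j * Real.log (s j)) - r j + s j := by
    intro j hj
    obtain ⟨hj1, hj2⟩ := Finset.mem_Icc.mp hj
    exact tangent_ineq (hr0 j hj1 (by omega)) (hspos j hj1 hj2)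
  have h1 : -∑ j ∈ Finset.Icc 1 m, r j * Real.log (r j) ≤
      -∑ j ∈ Finset.Icc 1 m, r j * Real.log (s j) := by
    have this := Finset.sum_le_sum htan
    rw [Finset.sum_neg_distrib] at this
    have e : ∑ j ∈ Finset.Icc 1 m, (-(r j * Real.log (s j)) - r j + s j)
        = -∑ j ∈ Finset.Icc 1 m, (r j * Real.log (s j))
          - ∑ j ∈ Finset.Icc 1 m, r j + ∑ j ∈ Finset.Icc 1 m, s j := by
      rw [Finset.sum_add_distrib, Finset.sum_sub_distrib, Finset.sum_neg_distrib]
    rw [e, hrs_m] at this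
    linarith
  -- Abel step
  have habel : 0 ≤ ∑ j ∈ Finset.Icc 1 m, (r j - s j) * Real.log (s j) := by
    have hD : ∀ k, 1 ≤ k → k ≤ m → 0 ≤ ∑ j ∈ Finset.Icc 1 k, (r j - s j) := by
      intro k hk1 hk2
      rw [Finset.sum_sub_distrib]
      have := hpre k hk1 (by omega)
      linarith
    have hL : ∀ j k, 1 ≤ j → j ≤ k → k ≤ m → Real.log (s k) ≤ Real.log (s j) := by
      intro j k h1' h2' h3'
      exact Real.log_le_log (hspos k (by omega) h3') (hanti j k h1' h2' (by omega))
    have := abel_bound (fun j => r j - s j) (fun j => Real.log (s j)) m hD hL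
    have hD0 : ∑ j ∈ Finset.Icc 1 m, (r j - s j) = 0 := by
      rw [Finset.sum_sub_distrib, hrs_m]; ring
    rw [hD0, zero_mul] at this
    exact this
  have e2 : ∑ j ∈ Finset.Icc 1 m, (r j - s j) * Real.log (s j)
      = ∑ j ∈ Finset.Icc 1 m, r j * Real.log (s j)
        - ∑ j ∈ Finset.Icc 1 m, s j * Real.log (s j) := by
    rw [← Finset.sum_sub_distrib]
    exact Finset.sum_congr rfl (fun j _ => by ring)
  linarith

set_option maxHeartbeats 1000000 in
/-- (Achievable Fano inequality, bound part.) For a joint distribution `q` on `{1,…,n}²`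
with `Y`-marginal `p^Y` (whose decreasing rearrangement is `pd`, witnessed by the
bijection `σ` of `{1,…,n}`), the conditional Shannon entropy is bounded by the entropy
of the smoothed distribution `p̃_E` built from `p^Y` and the error probability `E`. -/
theorem achievable_fano_bound (n : ℕ) (hn : 1 ≤ n) (q : ℕ → ℕ → ℝ)
    (hq0 : ∀ x ∈ Finset.Icc 1 n, ∀ y ∈ Finset.Icc 1 n, 0 ≤ q x y)
    (hq1 : ∑ x ∈ Finset.Icc 1 n, ∑ y ∈ Finset.Icc 1 n, q x y = 1)
    (pd : ℕ → ℝ) (σ : ℕ → ℕ)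
    (hσ : Set.BijOn σ (Set.Icc 1 n) (Set.Icc 1 n))
    (hsort : ∀ y ∈ Finset.Icc 1 n, (∑ x ∈ Finset.Icc 1 n, q x y) = pd (σ y))
    (hdec : ∀ y ∈ Finset.Icc 1 n, ∀ z ∈ Finset.Icc 1 n, y ≤ z → pd z ≤ pd y) :
    condEnt n q ≤ ent n (ptilde n pd (errProb n q)) := by
  classical
  set E := errProb n q with hEdef
  choose e he hsrt using fun x => exists_sorting n (fun y => q x y)
  set r : ℕ → ℝ := fun j => ∑ x ∈ Finset.Icc 1 n, q x (e x j) with hrdef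
  have hemem : ∀ x j, 1 ≤ j → j ≤ n → e x j ∈ Finset.Icc 1 n := by
    intro x j h1 h2
    have := (he x).mapsTo (Set.mem_Icc.mpr ⟨h1, h2⟩)
    exact Finset.mem_Icc.mpr (Set.mem_Icc.mp this)
  -- basic facts about r
  have hr0 : ∀ j, 1 ≤ j → j ≤ n → 0 ≤ r j := by
    intro j h1 h2
    exact Finset.sum_nonneg fun x hx => hq0 x hx _ (hemem x j h1 h2)
  have hranti : ∀ j k, 1 ≤ j → j ≤ k → k ≤ n → r k ≤ r j := by
    intro j k h1 h2 h3
    exact Finset.sum_le_sum fun x _ => hsrt x j k h1 h2 h3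
  have hrsum : ∑ j ∈ Finset.Icc 1 n, r j = 1 := by
    rw [hrdef]
    rw [Finset.sum_comm]
    rw [← hq1]
    exact Finset.sum_congr rfl fun x _ => sum_reindex (he x) (fun y => q x y)
  -- facts about pd
  have hpd0 : ∀ j, 1 ≤ j → j ≤ n → 0 ≤ pd j := by
    intro j h1 h2
    obtain ⟨y, hy, rfl⟩ := hσ.surjOn (Set.mem_Icc.mpr ⟨h1, h2⟩)
    rw [← hsort y (Finset.mem_Icc.mpr (Set.mem_Icc.mp hy))]
    exact Finset.sum_nonneg fun x hx => hq0 x hx y (Finset.mem_Icc.mpr (Set.mem_Icc.mp hy))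
  have hpdsum : ∑ j ∈ Finset.Icc 1 n, pd j = 1 := by
    rw [← sum_reindex hσ pd]
    rw [← hq1, Finset.sum_comm]
    exact Finset.sum_congr rfl fun y hy => (hsort y hy).symm
  -- diagonal sum
  have hdiag : ∑ x ∈ Finset.Icc 1 n, q x x = 1 - E := by
    have hE : E = ∑ x ∈ Finset.Icc 1 n, ((∑ y ∈ Finset.Icc 1 n, q x y) - q x x) := by
      rw [hEdef, errProb]
      apply Finset.sum_congr rfl
      intro x hx
      have h1 : ∑ y ∈ Finset.Icc 1 n, (if x = y then 0 else q x y)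
          = ∑ y ∈ Finset.Icc 1 n, (q x y - if x = y then q x y else 0) := by
        apply Finset.sum_congr rfl
        intro y _
        by_cases h : x = y <;> simp [h]
      rw [h1, Finset.sum_sub_distrib, Finset.sum_ite_eq, if_pos hx]
    rw [hE, Finset.sum_sub_distrib, hq1]
    ring
  have hdiag0 : 0 ≤ ∑ x ∈ Finset.Icc 1 n, q x x := by
    apply Finset.sum_nonneg
    intro x hx
    exact hq0 x hx x hx
  have hE0 : 0 ≤ E := by
    rw [hEdef, errProb]
    apply Finset.sum_nonneg; intro x hx
    apply Finset.sum_nonneg; intro y hy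
    by_cases h : x = y <;> simp [h, hq0 x hx y hy]
  have hE1 : 0 ≤ 1 - E := by rw [← hdiag]; exact hdiag0
  -- r 1 dominates the diagonal
  have hr1 : 1 - E ≤ r 1 := by
    rw [← hdiag]
    apply Finset.sum_le_sum
    intro x hx
    obtain ⟨hx1, hx2⟩ := Finset.mem_Icc.mp hx
    obtain ⟨j₀, hj₀, hej₀⟩ := (he x).surjOn (Set.mem_Icc.mpr ⟨hx1, hx2⟩)
    rw [Set.mem_Icc] at hj₀
    calc q x x = q x (e x j₀) := by rw [hej₀]
      _ ≤ q x (e x 1) := hsrt x 1 j₀ le_rfl hj₀.1 hj₀.2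
  -- prefix sums of r dominate those of pd
  have hprefix : ∀ k, 1 ≤ k → k ≤ n →
      ∑ j ∈ Finset.Icc 1 k, pd j ≤ ∑ j ∈ Finset.Icc 1 k, r j := by
    intro k hk1 hk2
    set S := (Finset.Icc 1 n).filter (fun y => σ y ≤ k) with hSdef
    have hSsub : S ⊆ Finset.Icc 1 n := Finset.filter_subset _ _
    have hSim : S.image σ = Finset.Icc 1 k := by
      apply Finset.Subset.antisymm
      · intro j hj
        obtain ⟨y, hy, rfl⟩ := Finset.mem_image.mp hj
        obtain ⟨hy1, hy2⟩ := Finset.mem_filter.mp hy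
        have hmt := hσ.mapsTo (Set.mem_Icc.mpr (Finset.mem_Icc.mp hy1))
        rw [Set.mem_Icc] at hmt
        exact Finset.mem_Icc.mpr ⟨hmt.1, hy2⟩
      · intro j hj
        obtain ⟨hj1, hj2⟩ := Finset.mem_Icc.mp hj
        obtain ⟨y, hy, rfl⟩ := hσ.surjOn (Set.mem_Icc.mpr ⟨hj1, le_trans hj2 hk2⟩)
        rw [Set.mem_Icc] at hy
        exact Finset.mem_image.mpr ⟨y, Finset.mem_filter.mpr ⟨Finset.mem_Icc.mpr hy, hj2⟩, rfl⟩
    have hinj : ∀ a ∈ S, ∀ b ∈ S, σ a = σ b → a = b := by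
      intro a ha b hb hab
      exact hσ.injOn (Set.mem_Icc.mpr (Finset.mem_Icc.mp (hSsub ha)))
        (Set.mem_Icc.mpr (Finset.mem_Icc.mp (hSsub hb))) hab
    have h1 : ∑ j ∈ Finset.Icc 1 k, pd j = ∑ y ∈ S, ∑ x ∈ Finset.Icc 1 n, q x y := by
      rw [← hSim, Finset.sum_image hinj]
      exact Finset.sum_congr rfl fun y hy => (hsort y (hSsub hy)).symm
    have hScard : S.card ≤ k := by
      have h := Finset.card_image_of_injOn (s := S) (f := σ) (fun a ha b hb hab => hinj a ha b hb hab)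
      rw [hSim, Nat.card_Icc] at h
      omega
    have h2 : ∀ x ∈ Finset.Icc 1 n, ∑ y ∈ S, q x y ≤ ∑ j ∈ Finset.Icc 1 k, q x (e x j) := by
      intro x hx
      set T := (Finset.Icc 1 k).image (e x) with hTdef
      have hTsub : T ⊆ Finset.Icc 1 n := by
        intro t ht
        obtain ⟨j, hj, rfl⟩ := Finset.mem_image.mp ht
        obtain ⟨hj1, hj2⟩ := Finset.mem_Icc.mp hj
        exact hemem x j hj1 (le_trans hj2 hk2)
      have hTinj : ∀ a ∈ Finset.Icc 1 k, ∀ b ∈ Finset.Icc 1 k, e x a = e x b → a = b := by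
        intro a ha b hb hab
        obtain ⟨ha1, ha2⟩ := Finset.mem_Icc.mp ha
        obtain ⟨hb1, hb2⟩ := Finset.mem_Icc.mp hb
        exact (he x).injOn (Set.mem_Icc.mpr ⟨ha1, le_trans ha2 hk2⟩)
          (Set.mem_Icc.mpr ⟨hb1, le_trans hb2 hk2⟩) hab
      have hTcard : T.card = k := by
        rw [hTdef, Finset.card_image_of_injOn (fun a ha b hb hab => hTinj a ha b hb hab),
          Nat.card_Icc]
        omega
      have hdom : ∀ t ∈ T, ∀ y ∈ S, y ∉ T → q x y ≤ q x t := by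
        intro t ht y hyS hyT
        obtain ⟨j, hj, rfl⟩ := Finset.mem_image.mp ht
        obtain ⟨hj1, hj2⟩ := Finset.mem_Icc.mp hj
        have hyIcc := Finset.mem_Icc.mp (hSsub hyS)
        obtain ⟨j', hj', hej'⟩ := (he x).surjOn (Set.mem_Icc.mpr hyIcc)
        rw [Set.mem_Icc] at hj'
        have hj'k : ¬ j' ≤ k := by
          intro hc
          exact hyT (Finset.mem_image.mpr ⟨j', Finset.mem_Icc.mpr ⟨hj'.1, hc⟩, hej'⟩)
        rw [← hej']
        exact hsrt x j j' hj1 (by omega) hj'.2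
      have := greedy_sum_le (Finset.Icc 1 n) T S (q x) hTsub hSsub (hq0 x hx)
        (by omega) hdom
      calc ∑ y ∈ S, q x y ≤ ∑ y ∈ T, q x y := this
        _ = ∑ j ∈ Finset.Icc 1 k, q x (e x j) :=
            Finset.sum_image (fun a ha b hb hab => hTinj a ha b hb hab)
    calc ∑ j ∈ Finset.Icc 1 k, pd j = ∑ y ∈ S, ∑ x ∈ Finset.Icc 1 n, q x y := h1
      _ = ∑ x ∈ Finset.Icc 1 n, ∑ y ∈ S, q x y := Finset.sum_comm
      _ ≤ ∑ x ∈ Finset.Icc 1 n, ∑ j ∈ Finset.Icc 1 k, q x (e x j) := Finset.sum_le_sum h2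
      _ = ∑ j ∈ Finset.Icc 1 k, r j := Finset.sum_comm

  -- Step 1 : conditional entropy is at most the entropy of r
  have step1 : condEnt n q ≤ -∑ j ∈ Finset.Icc 1 n, r j * Real.log (r j) := by
    rw [condEnt]
    have perx : ∀ x ∈ Finset.Icc 1 n,
        pXof n q x * (-∑ y ∈ Finset.Icc 1 n,
          (q x y / pXof n q x) * Real.log (q x y / pXof n q x))
        ≤ -∑ j ∈ Finset.Icc 1 n, q x (e x j) * Real.log (r j) := by
      intro x hx
      have hpx0 : 0 ≤ pXof n q x := Finset.sum_nonneg fun y hy => hq0 x hx y hy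
      have hsumu : ∑ j ∈ Finset.Icc 1 n, q x (e x j) = pXof n q x :=
        sum_reindex (he x) (fun y => q x y)
      have huv : ∀ j ∈ Finset.Icc 1 n, q x (e x j) ≤ r j := by
        intro j hj
        exact Finset.single_le_sum
          (fun x' hx' => hq0 x' hx' _ (hemem x' j (Finset.mem_Icc.mp hj).1 (Finset.mem_Icc.mp hj).2)) hx
      have hu0 : ∀ j ∈ Finset.Icc 1 n, 0 ≤ q x (e x j) := fun j hj =>
        hq0 x hx _ (hemem x j (Finset.mem_Icc.mp hj).1 (Finset.mem_Icc.mp hj).2)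
      rcases eq_or_lt_of_le hpx0 with h0 | h0
      · -- pXof = 0 : everything vanishes
        have hall : ∀ y ∈ Finset.Icc 1 n, q x y = 0 :=
          (Finset.sum_eq_zero_iff_of_nonneg (fun y hy => hq0 x hx y hy)).mp h0.symm
        have hR : ∑ j ∈ Finset.Icc 1 n, q x (e x j) * Real.log (r j) = 0 :=
          Finset.sum_eq_zero fun j hj => by
            rw [hall _ (hemem x j (Finset.mem_Icc.mp hj).1 (Finset.mem_Icc.mp hj).2)]; ring
        rw [hR, ← h0, neg_zero, zero_mul]
      · have hL : pXof n q x * (-∑ y ∈ Finset.Icc 1 n,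
            (q x y / pXof n q x) * Real.log (q x y / pXof n q x))
            = -∑ y ∈ Finset.Icc 1 n, q x y * Real.log (q x y / pXof n q x) := by
          rw [mul_neg, neg_inj, Finset.mul_sum]
          apply Finset.sum_congr rfl
          intro y _
          rw [← mul_assoc, mul_div_cancel₀ _ (ne_of_gt h0)]
        have hRe : ∑ y ∈ Finset.Icc 1 n, q x y * Real.log (q x y / pXof n q x)
            = ∑ j ∈ Finset.Icc 1 n, q x (e x j) * Real.log (q x (e x j) / pXof n q x) :=
          (sum_reindex (he x) (fun y => q x y * Real.log (q x y / pXof n q x))).symm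
        have hg := gibbs (Finset.Icc 1 n) (fun j => q x (e x j)) r hu0 huv hrsum
        rw [hsumu] at hg
        rw [hL, hRe]
        exact hg
    calc ∑ x ∈ Finset.Icc 1 n, pXof n q x * (-∑ y ∈ Finset.Icc 1 n,
          (q x y / pXof n q x) * Real.log (q x y / pXof n q x))
        ≤ ∑ x ∈ Finset.Icc 1 n, -∑ j ∈ Finset.Icc 1 n, q x (e x j) * Real.log (r j) :=
          Finset.sum_le_sum perx
      _ = -∑ j ∈ Finset.Icc 1 n, r j * Real.log (r j) := by
          rw [Finset.sum_neg_distrib, neg_inj, Finset.sum_comm]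
          apply Finset.sum_congr rfl
          intro j _
          rw [← Finset.sum_mul]

  -- Step 2 : entropy of r is at most entropy of ptilde
  have step2 : -∑ j ∈ Finset.Icc 1 n, r j * Real.log (r j) ≤ ent n (ptilde n pd E) := by
    by_cases h1 : 1 - E ≤ pd 1
    · -- easy branch : ptilde = pd
      have hent : ent n (ptilde n pd E) = -∑ j ∈ Finset.Icc 1 n, pd j * Real.log (pd j) := by
        rw [ent]
        congr 1
        apply Finset.sum_congr rfl
        intro j _
        simp only [ptilde, if_pos h1]
      rw [hent]
      exact ent_le_of_prefix n r pd hr0 hpd0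
        (fun j k hj hjk hk => hdec j (Finset.mem_Icc.mpr ⟨hj, by omega⟩) k
          (Finset.mem_Icc.mpr ⟨by omega, hk⟩) hjk)
        (by rw [hrsum, hpdsum]) hprefix
    · push_neg at h1
      -- h1 : pd 1 < 1 - E
      have hn2 : 2 ≤ n := by
        by_contra hcn
        have hn1 : n = 1 := by omega
        have hpd1 : pd 1 = 1 := by
          rw [← hpdsum, hn1]; simp
        linarith
      have hMn : ME n pd E ≤ n := Nat.findGreatest_le n
      have hsplit1 : pd 1 + ∑ j ∈ Finset.Ioc 1 n, pd j = 1 := by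
        have h := Icc_split pd hn
        rw [hpdsum] at h
        have h11 : ∑ j ∈ Finset.Icc 1 1, pd j = pd 1 := by simp
        linarith
      have hsplit2 : ∑ j ∈ Finset.Ioc 1 n, pd j = pd 2 + ∑ j ∈ Finset.Icc 3 n, pd j := by
        rw [← Finset.sum_Ioc_consecutive pd (show (1:ℕ) ≤ 2 by omega) hn2,
          show Finset.Ioc 2 n = Finset.Icc 3 n from (Finset.Icc_add_one_left_eq_Ioc 2 n).symm,
          show Finset.Ioc 1 2 = Finset.Icc 2 2 from (Finset.Icc_add_one_left_eq_Ioc 1 2).symm,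
          Finset.Icc_self, Finset.sum_singleton]
      have hP2 : 2 ≤ 2 ∧
          (E - ∑ y ∈ Finset.Icc (2 + 1) n, pd y) / (((2:ℕ) : ℝ) - 1) < pd 2 := by
        refine ⟨le_rfl, ?_⟩
        have h21 : (((2:ℕ) : ℝ) - 1) = 1 := by norm_num
        rw [h21, div_one, show (2:ℕ) + 1 = 3 from rfl]
        linarith
      have hM2 : 2 ≤ ME n pd E := by
        unfold ME
        exact Nat.le_findGreatest hn2 hP2
      have hkey : 2 ≤ ME n pd E ∧
          (E - ∑ y ∈ Finset.Icc (ME n pd E + 1) n, pd y) / ((ME n pd E : ℝ) - 1)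
            < pd (ME n pd E) := by
        exact Nat.findGreatest_spec (P := fun m => 2 ≤ m ∧
          (E - ∑ y ∈ Finset.Icc (m + 1) n, pd y) / ((m : ℝ) - 1) < pd m) hn2 hP2
      have hgreatest : ∀ mm, ME n pd E < mm → mm ≤ n → ¬(2 ≤ mm ∧
          (E - ∑ y ∈ Finset.Icc (mm + 1) n, pd y) / ((mm : ℝ) - 1) < pd mm) := by
        intro mm hlt hle
        exact Nat.findGreatest_is_greatest (P := fun m => 2 ≤ m ∧
          (E - ∑ y ∈ Finset.Icc (m + 1) n, pd y) / ((m : ℝ) - 1) < pd m)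
          (show Nat.findGreatest _ n < mm from hlt) hle
      set M := ME n pd E with hMdef
      set T := ∑ y ∈ Finset.Icc (M + 1) n, pd y with hTdef
      set c := (E - T) / ((M : ℝ) - 1) with hcdef
      have hM1R : (1:ℝ) ≤ (M:ℝ) - 1 := by
        have h2M : (2:ℝ) ≤ (M:ℝ) := by exact_mod_cast hM2
        linarith
      have hcM : c < pd M := hkey.2
      have hcT : ((M:ℝ) - 1) * c = E - T := by
        rw [hcdef]
        field_simp
      have hTIoc : ∑ j ∈ Finset.Ioc M n, pd j = T := by
        rw [hTdef, show Finset.Icc (M+1) n = Finset.Ioc M n from Finset.Icc_add_one_left_eq_Ioc M n]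
      -- c dominates the tail of pd
      have htail_c : M < n → pd (M + 1) ≤ c := by
        intro hMltn
        have hnot := hgreatest (M + 1) (by omega) (by omega)
        push_neg at hnot
        have hble := hnot (by omega)
        have hcast : ((M + 1 : ℕ) : ℝ) - 1 = (M : ℝ) := by push_cast; ring
        rw [hcast] at hble
        have hMpos : (0:ℝ) < (M:ℝ) := by linarith
        have hT2 : T = pd (M + 1) + ∑ y ∈ Finset.Icc (M + 2) n, pd y := by
          rw [hTdef,
            show Finset.Icc (M + 1) n = Finset.Ioc M n from Finset.Icc_add_one_left_eq_Ioc M n,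
            ← Finset.sum_Ioc_consecutive pd (show M ≤ M + 1 by omega) (show M + 1 ≤ n by omega)]
          congr 1
          · rw [show Finset.Ioc M (M + 1) = Finset.Icc (M + 1) (M + 1) from
              (Finset.Icc_add_one_left_eq_Ioc M (M + 1)).symm, Finset.Icc_self, Finset.sum_singleton]
          · rw [show Finset.Ioc (M + 1) n = Finset.Icc (M + 2) n from
              (Finset.Icc_add_one_left_eq_Ioc (M + 1) n).symm]

        rw [le_div_iff₀ hMpos] at hble
        rw [hcdef, le_div_iff₀ (show (0:ℝ) < (M:ℝ) - 1 by linarith)]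
        rw [hT2]
        linarith
      have hcpd : ∀ j, M < j → j ≤ n → pd j ≤ c := by
        intro j hj1 hj2
        have hMltn : M < n := by omega
        exact le_trans (hdec (M + 1) (Finset.mem_Icc.mpr ⟨by omega, by omega⟩) j
          (Finset.mem_Icc.mpr ⟨by omega, hj2⟩) (by omega)) (htail_c hMltn)
      have hc0 : 0 ≤ c := by
        rcases eq_or_lt_of_le hMn with hMeq | hMlt
        · have hTe : Finset.Icc (M + 1) n = ∅ := Finset.Icc_eq_empty (by omega)
          have hT0 : T = 0 := by rw [hTdef, hTe, Finset.sum_empty]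
          rw [hcdef, hT0]
          apply div_nonneg <;> linarith
        · exact le_trans (hpd0 (M + 1) (by omega) (by omega)) (htail_c hMlt)
      -- values of ptilde
      have hps1 : ptilde n pd E 1 = 1 - E := by
        simp only [ptilde, if_neg (not_le.mpr h1)]
        simp
      have hpsmid : ∀ j, 2 ≤ j → j ≤ M → ptilde n pd E j = c := by
        intro j hj1 hj2
        simp only [ptilde, if_neg (not_le.mpr h1)]
        rw [if_neg (by omega), if_pos (by rw [← hMdef]; exact hj2)]
      have hpstail : ∀ j, M < j → ptilde n pd E j = pd j := by
        intro j hj1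
        simp only [ptilde, if_neg (not_le.mpr h1)]
        rw [if_neg (by omega), if_neg (by rw [← hMdef]; omega)]
      -- nonnegativity of ptilde
      have hs0 : ∀ j, 1 ≤ j → j ≤ n → 0 ≤ ptilde n pd E j := by
        intro j hj1 hj2
        rcases Nat.lt_or_ge M j with h | h
        · rw [hpstail j h]; exact hpd0 j hj1 hj2
        · rcases Nat.lt_or_ge j 2 with h' | h'
          · have : j = 1 := by omega
            rw [this, hps1]; exact hE1
          · rw [hpsmid j h' h]; exact hc0
      -- key comparisons
      have hpdM1 : pd M ≤ pd 1 :=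
        hdec 1 (Finset.mem_Icc.mpr ⟨le_rfl, hn⟩) M (Finset.mem_Icc.mpr ⟨by omega, hMn⟩) (by omega)
      have hc1E : c < 1 - E := by linarith
      -- antitonicity of ptilde
      have hsanti : ∀ j k, 1 ≤ j → j ≤ k → k ≤ n →
          ptilde n pd E k ≤ ptilde n pd E j := by
        intro j k hj1 hjk hkn
        rcases Nat.lt_or_ge j 2 with hj2 | hj2
        · have hj1' : j = 1 := by omega
          rw [hj1', hps1]
          rcases Nat.lt_or_ge k 2 with hk2 | hk2
          · have : k = 1 := by omega
            rw [this, hps1]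
          · rcases Nat.lt_or_ge M k with hMk | hMk
            · rw [hpstail k hMk]
              have := hdec 1 (Finset.mem_Icc.mpr ⟨le_rfl, hn⟩) k
                (Finset.mem_Icc.mpr ⟨by omega, hkn⟩) (by omega)
              linarith
            · rw [hpsmid k hk2 hMk]; linarith
        · rcases Nat.lt_or_ge M j with hMj | hMj
          · rw [hpstail j hMj, hpstail k (by omega)]
            exact hdec j (Finset.mem_Icc.mpr ⟨hj1, by omega⟩) k
              (Finset.mem_Icc.mpr ⟨by omega, hkn⟩) hjk
          · rw [hpsmid j hj2 hMj]
            rcases Nat.lt_or_ge M k with hMk | hMk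
            · rw [hpstail k hMk]
              exact hcpd k hMk hkn
            · rw [hpsmid k (by omega) hMk]
      -- sum over the middle block
      have hmid_sum : ∑ j ∈ Finset.Ioc 1 M, ptilde n pd E j = ((M:ℝ) - 1) * c := by
        have hconst : ∀ j ∈ Finset.Ioc 1 M, ptilde n pd E j = c := by
          intro j hj
          obtain ⟨hja, hjb⟩ := Finset.mem_Ioc.mp hj
          exact hpsmid j (by omega) hjb
        rw [Finset.sum_congr rfl hconst, Finset.sum_const, Nat.card_Ioc, nsmul_eq_mul]
        congr 1
        push_cast [Nat.cast_sub (show 1 ≤ M by omega)]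
        ring
      have htail_sum : ∀ k, M ≤ k → k ≤ n →
          ∑ j ∈ Finset.Ioc M k, ptilde n pd E j = ∑ j ∈ Finset.Ioc M k, pd j := by
        intro k _ _
        exact Finset.sum_congr rfl fun j hj => hpstail j (Finset.mem_Ioc.mp hj).1
      have hheadM : ∑ j ∈ Finset.Icc 1 M, ptilde n pd E j = (1 - E) + ((M:ℝ) - 1) * c := by
        have h := Icc_split (fun j => ptilde n pd E j) (show 1 ≤ M by omega)
        have h11 : ∑ j ∈ Finset.Icc 1 1, ptilde n pd E j = 1 - E := by
          simp [hps1]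
        rw [h, h11, hmid_sum]
      have hpdheadM : ∑ j ∈ Finset.Icc 1 M, pd j = 1 - T := by
        have h := Icc_split pd hMn
        rw [hpdsum, hTIoc] at h
        linarith
      -- total sum of ptilde is 1
      have hssum : ∑ j ∈ Finset.Icc 1 n, ptilde n pd E j = 1 := by
        have h := Icc_split (fun j => ptilde n pd E j) hMn
        rw [h, hheadM, htail_sum n (by omega) le_rfl, hTIoc]
        linarith
      -- prefix domination for ptilde
      have hspre : ∀ k, 1 ≤ k → k ≤ n →
          ∑ j ∈ Finset.Icc 1 k, ptilde n pd E j ≤ ∑ j ∈ Finset.Icc 1 k, r j := by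
        intro k hk1 hk2
        rcases Nat.lt_or_ge k M with hkM | hkM
        · -- k < M
          have hsk : ∑ j ∈ Finset.Icc 1 k, ptilde n pd E j = (1 - E) + ((k:ℝ) - 1) * c := by
            have h := Icc_split (fun j => ptilde n pd E j) hk1
            have h11 : ∑ j ∈ Finset.Icc 1 1, ptilde n pd E j = 1 - E := by simp [hps1]
            have hconst : ∀ j ∈ Finset.Ioc 1 k, ptilde n pd E j = c := by
              intro j hj
              obtain ⟨hja, hjb⟩ := Finset.mem_Ioc.mp hj
              exact hpsmid j (by omega) (by omega)
            rw [h, h11, Finset.sum_congr rfl hconst, Finset.sum_const, Nat.card_Ioc,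
              nsmul_eq_mul]
            congr 1
            push_cast [Nat.cast_sub (show 1 ≤ k by omega)]
            ring
          rw [hsk]
          rcases le_total c (r k) with hrc | hrc
          · -- c ≤ r k : use the head
            have hh := Icc_split r hk1
            have h11 : ∑ j ∈ Finset.Icc 1 1, r j = r 1 := by simp
            have hlow : ((k:ℝ) - 1) * c ≤ ∑ j ∈ Finset.Ioc 1 k, r j := by
              have := Finset.card_nsmul_le_sum (Finset.Ioc 1 k) r c
                (fun j hj => by
                  obtain ⟨hja, hjb⟩ := Finset.mem_Ioc.mp hj
                  exact le_trans hrc (hranti j k (by omega) hjb hk2))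
              rw [Nat.card_Ioc, nsmul_eq_mul] at this
              calc ((k:ℝ) - 1) * c = ((k - 1 : ℕ) : ℝ) * c := by
                    push_cast [Nat.cast_sub (show 1 ≤ k by omega)]; ring
                _ ≤ _ := this
            rw [hh, h11]
            linarith
          · -- r k ≤ c : use the block up to M
            have hh := Icc_split r (show k ≤ M by omega)
            have hup : ∑ j ∈ Finset.Ioc k M, r j ≤ ((M:ℝ) - (k:ℝ)) * c := by
              have := Finset.sum_le_card_nsmul (Finset.Ioc k M) r c
                (fun j hj => le_trans
                  (hranti k j hk1 (le_of_lt (Finset.mem_Ioc.mp hj).1) (by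
                    have := (Finset.mem_Ioc.mp hj).2; omega)) hrc)
              rw [Nat.card_Ioc, nsmul_eq_mul] at this
              calc ∑ j ∈ Finset.Ioc k M, r j ≤ ((M - k : ℕ) : ℝ) * c := this
                _ = ((M:ℝ) - (k:ℝ)) * c := by
                    push_cast [Nat.cast_sub (show k ≤ M by omega)]; ring
            have hlowM : ∑ j ∈ Finset.Icc 1 M, pd j ≤ ∑ j ∈ Finset.Icc 1 M, r j :=
              hprefix M (by omega) hMn
            rw [hpdheadM] at hlowM
            have : (1 - T) - ((M:ℝ) - (k:ℝ)) * c ≤ ∑ j ∈ Finset.Icc 1 k, r j := by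
              rw [hh] at hlowM
              linarith
            nlinarith [this, hcT]
        · -- M ≤ k
          have hsk : ∑ j ∈ Finset.Icc 1 k, ptilde n pd E j = ∑ j ∈ Finset.Icc 1 k, pd j := by
            have h := Icc_split (fun j => ptilde n pd E j) hkM
            have h' := Icc_split pd hkM
            rw [h, h', hheadM, hpdheadM, htail_sum k hkM hk2]
            linarith
          rw [hsk]
          exact hprefix k hk1 hk2
      -- conclude via the Schur-type lemma
      have hfin := ent_le_of_prefix n r (ptilde n pd E) hr0 hs0 hsanti
        (by rw [hrsum, hssum]) hspre
      rw [ent]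
      exact hfin

  linarith
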